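/- The ω-th Cantor–Bendixson derivative of R * F equals {0}, where F = {F ⊆ ℕ : |F| ≤ min F + 2} ∪ {∅}. In particular R * F is homeomorphic to a countable compact space of Cantor–Bendixson rank ω + 1, hence embeds in the ordinal interval [1, ω^ω]. -/

import Mathlib

open Filter Topology

def memF (F : Finset ℕ) : Prop :=
  F = ∅ ∨ (F.Nonempty ∧ F.card ≤ sInf (F : Set ℕ) + 2)

def derivSet {α : Type*} [TopologicalSpace α] (A : Set α) : Set α :=
  {x | AccPt x (𝓟 A)}

/-- `R * 𝓕`: functions with values in `R` whose support belongs to the family `𝓕`. -/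
def RF (R : Set ℝ) : Set (ℕ → ℝ) :=
  {f | (∀ i, f i ∈ R) ∧ ∃ F : Finset ℕ, memF F ∧ ∀ i, f i ≠ 0 ↔ i ∈ F}

/-- Auxiliary: "rank-n goodness" of the support of `f`. -/
def Good (n : ℕ) (f : ℕ → ℝ) : Prop :=
  ∀ T : Finset ℕ, T.Nonempty → (∀ i ∈ T, f i ≠ 0) → T.card + n ≤ sInf (T : Set ℕ) + 2

/-- The candidate for the n-th derived set of `RF R`. -/
def An (R : Set ℝ) (n : ℕ) : Set (ℕ → ℝ) :=
  {f | (∀ i, f i ∈ R) ∧ Good n f}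

lemma good_iff (n : ℕ) (f : ℕ → ℝ) :
    Good n f ↔ ∃ F : Finset ℕ,
      (F = ∅ ∨ (F.Nonempty ∧ F.card + n ≤ sInf (F : Set ℕ) + 2)) ∧
      ∀ i, f i ≠ 0 ↔ i ∈ F := by
  constructor
  · intro hg
    by_cases h : ∀ i, f i = 0
    · exact ⟨∅, Or.inl rfl, fun i => by simp [h i]⟩
    push_neg at h
    obtain ⟨m, hm⟩ := h
    have hsub : ∀ T : Finset ℕ, (∀ i ∈ T, f i ≠ 0) → T.card ≤ m + 2 := by
      intro T hT
      have h1 : ∀ i ∈ insert m T, f i ≠ 0 := by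
        intro i hi
        rcases Finset.mem_insert.1 hi with h | h
        · exact h ▸ hm
        · exact hT i h
      have h2 := hg (insert m T) ⟨m, Finset.mem_insert_self m T⟩ h1
      have h3 : sInf ((insert m T : Finset ℕ) : Set ℕ) ≤ m := Nat.sInf_le (by simp)
      have h4 : T.card ≤ (insert m T).card := Finset.card_le_card (Finset.subset_insert m T)
      omega
    have hfin : {i | f i ≠ 0}.Finite := by
      by_contra hinf
      obtain ⟨T, hTs, hTc⟩ := Set.Infinite.exists_subset_card_eq hinf (m + 3)
      have := hsub T (fun i hi => hTs hi)
      omega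
    refine ⟨hfin.toFinset, Or.inr ⟨⟨m, by simpa using hm⟩, ?_⟩, fun i => by simp⟩
    exact hg _ ⟨m, by simpa using hm⟩ (fun i hi => by simpa using hi)
  · rintro ⟨F, hF, hsupp⟩ T hT hTnz
    have hTF : T ⊆ F := fun i hi => (hsupp i).1 (hTnz i hi)
    have hFne : F.Nonempty := hT.mono hTF
    rcases hF with h | ⟨_, hcard⟩
    · exact absurd hFne (by simp [h])
    have h1 : T.card ≤ F.card := Finset.card_le_card hTF
    have h2 : sInf (F : Set ℕ) ≤ sInf (T : Set ℕ) := by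
      apply Nat.sInf_le
      have : sInf (T : Set ℕ) ∈ (T : Set ℕ) := Nat.sInf_mem (Finset.coe_nonempty.2 hT)
      exact_mod_cast hTF (by exact_mod_cast this)
    omega

lemma An_zero (R : Set ℝ) : An R 0 = RF R := by
  ext f
  simp only [An, RF, Set.mem_setOf_eq, good_iff, memF]
  constructor <;> rintro ⟨h1, F, h2, h3⟩ <;>
    exact ⟨h1, F, by simpa using h2, h3⟩

lemma An_closed {R : Set ℝ} (hR : IsClosed R) (n : ℕ) : IsClosed (An R n) := by
  apply isClosed_of_closure_subset
  intro f hf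
  constructor
  · intro i
    have hfi : f i ∈ closure R := by
      rw [mem_closure_iff_nhds]
      intro V hV
      have hU : (fun g : ℕ → ℝ => g i) ⁻¹' V ∈ 𝓝 f :=
        (continuous_apply i).continuousAt.preimage_mem_nhds hV
      obtain ⟨g, hgU, hg⟩ := mem_closure_iff_nhds.1 hf _ hU
      exact ⟨g i, hgU, hg.1 i⟩
    rwa [hR.closure_eq] at hfi
  · intro T hT hTnz
    by_contra hlt
    have hUopen : ∀ i ∈ T, {g : ℕ → ℝ | g i ≠ 0} ∈ 𝓝 f := by
      intro i hi
      have hop : IsOpen {g : ℕ → ℝ | g i ≠ 0} := by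
        have heq : {g : ℕ → ℝ | g i ≠ 0} = (fun g : ℕ → ℝ => g i) ⁻¹' {y : ℝ | y ≠ 0} := rfl
        rw [heq]
        exact IsOpen.preimage (continuous_apply i) isOpen_ne
      exact hop.mem_nhds (hTnz i hi)
    have hU : (⋂ i ∈ T, {g : ℕ → ℝ | g i ≠ 0}) ∈ 𝓝 f :=
      (Filter.biInter_finset_mem T).2 hUopen
    obtain ⟨g, hgU, hgA⟩ := mem_closure_iff_nhds.1 hf _ hU
    simp only [Set.mem_iInter, Set.mem_setOf_eq] at hgU
    exact hlt (hgA.2 T hT hgU)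

lemma accPt_of_seq {X : Type*} [TopologicalSpace X] {A : Set X} {x : X} (g : ℕ → X)
    (hA : ∀ k, g k ∈ A) (hgne : ∀ k, g k ≠ x) (hlim : Tendsto g atTop (𝓝 x)) :
    AccPt x (𝓟 A) := by
  rw [accPt_iff_nhds]
  intro U hU
  obtain ⟨k, hk⟩ := (hlim.eventually_mem hU).exists
  exact ⟨g k, ⟨hk, hA k⟩, hgne k⟩

lemma deriv_An {R : Set ℝ} (hcomp : IsCompact R) (h0 : (0:ℝ) ∈ R) (hne : R ≠ {0})
    (hacc : ∀ x : ℝ, AccPt x (𝓟 R) ↔ x = 0) (n : ℕ) :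
    derivSet (An R n) = An R (n + 1) := by
  obtain ⟨r, hrR, hr0⟩ : ∃ r ∈ R, r ≠ 0 := by
    by_contra h
    push_neg at h
    exact hne (Set.eq_singleton_iff_unique_mem.2 ⟨h0, fun x hx => h x hx⟩)
  ext f
  constructor
  · intro hf
    have hfA : f ∈ An R n := by
      have h1 : f ∈ closure (An R n) :=
        mem_closure_iff_clusterPt.2 (AccPt.clusterPt hf)
      rwa [(An_closed hcomp.isClosed n).closure_eq] at h1
    obtain ⟨hval, hgood⟩ := hfA
    refine ⟨hval, ?_⟩
    rw [good_iff] at hgood ⊢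
    obtain ⟨F, hF, hsupp⟩ := hgood
    refine ⟨F, ?_, hsupp⟩
    rcases hF with h | ⟨hFne, hcard⟩
    · exact Or.inl h
    refine Or.inr ⟨hFne, ?_⟩
    by_contra hbad
    -- so F.card + n = sInf F + 2; f is then isolated in An R n, contradiction
    have hiso : ∀ i ∈ F, ∃ V ∈ 𝓝 (f i), ∀ y ∈ V ∩ R, y = f i := by
      intro i hi
      have hni : ¬ AccPt (f i) (𝓟 R) := by
        rw [hacc]
        exact (hsupp i).2 hi
      rw [accPt_iff_nhds] at hni
      push_neg at hni
      exact hni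
    choose! V hV1 hV2 using hiso
    have hU : {g : ℕ → ℝ | ∀ i ∈ F, g i ∈ V i} ∈ 𝓝 f := by
      rw [show {g : ℕ → ℝ | ∀ i ∈ F, g i ∈ V i}
          = ⋂ i ∈ F, (fun g : ℕ → ℝ => g i) ⁻¹' V i by ext; simp]
      exact (Filter.biInter_finset_mem F).2
        (fun i hi => (continuous_apply i).continuousAt.preimage_mem_nhds (hV1 i hi))
    rw [derivSet, Set.mem_setOf_eq, accPt_iff_nhds] at hf
    obtain ⟨g, ⟨hgU, hgA⟩, hgne⟩ := hf _ hU
    have hgF : ∀ i ∈ F, g i = f i := fun i hi => hV2 i hi (g i) ⟨hgU i hi, hgA.1 i⟩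
    obtain ⟨G, hG, hGsupp⟩ := (good_iff n g).1 hgA.2
    have hFG : F ⊆ G := by
      intro i hi
      apply (hGsupp i).1
      rw [hgF i hi]
      exact (hsupp i).2 hi
    have hGne : G.Nonempty := hFne.mono hFG
    rcases hG with h | ⟨_, hGcard⟩
    · exact absurd hGne (by simp [h])
    have hsInfG : sInf (G : Set ℕ) ≤ sInf (F : Set ℕ) := by
      apply Nat.sInf_le
      have : sInf (F : Set ℕ) ∈ (F : Set ℕ) := Nat.sInf_mem (Finset.coe_nonempty.2 hFne)
      exact_mod_cast hFG (by exact_mod_cast this)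
    by_cases heq : sInf (G : Set ℕ) = sInf (F : Set ℕ)
    · have hle : G.card ≤ F.card := by omega
      have hGF : F = G := Finset.eq_of_subset_of_card_le hFG hle
      apply hgne
      funext i
      by_cases hi : i ∈ F
      · exact hgF i hi
      · have hg0 : g i = 0 := by
          by_contra h'
          exact hi (hGF ▸ (hGsupp i).1 h')
        have hf0 : f i = 0 := by
          by_contra h'
          exact hi ((hsupp i).1 h')
        rw [hg0, hf0]
    · have hmemG : sInf (G : Set ℕ) ∈ G := by
        have : sInf (G : Set ℕ) ∈ (G : Set ℕ) := Nat.sInf_mem (Finset.coe_nonempty.2 hGne)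
        exact_mod_cast this
      have hnotF : sInf (G : Set ℕ) ∉ F := by
        intro h
        have : sInf (F : Set ℕ) ≤ sInf (G : Set ℕ) := Nat.sInf_le (by exact_mod_cast h)
        omega
      have hlt : F.card < G.card :=
        Finset.card_lt_card ((Finset.ssubset_iff_of_subset hFG).2
          ⟨sInf (G : Set ℕ), hmemG, hnotF⟩)
      omega
  · rintro ⟨hval, hgood⟩
    rw [good_iff] at hgood
    obtain ⟨F, hF, hsupp⟩ := hgood
    set N := sInf (F : Set ℕ) + F.card + n + (F.sup id) + 3 with hN
    set g : ℕ → (ℕ → ℝ) := fun k => Function.update f (k + N) r with hgdef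
    have hj : ∀ k, k + N ∉ F := by
      intro k h
      have := Finset.le_sup (f := id) h
      simp only [id] at this
      omega
    apply accPt_of_seq g
    · intro k
      constructor
      · intro i
        rcases eq_or_ne i (k + N) with h | h
        · subst h
          simp only [hgdef, Function.update_self]
          exact hrR
        · simp only [hgdef, Function.update_of_ne h]
          exact hval i
      · rw [good_iff]
        refine ⟨insert (k + N) F, Or.inr ⟨⟨_, Finset.mem_insert_self _ _⟩, ?_⟩, ?_⟩
        · have hcardI : (insert (k + N) F).card = F.card + 1 :=
            Finset.card_insert_of_notMem (hj k)
          have hmemI : sInf ((insert (k + N) F : Finset ℕ) : Set ℕ) ∈ insert (k + N) F := by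
            have : sInf ((insert (k + N) F : Finset ℕ) : Set ℕ)
                ∈ ((insert (k + N) F : Finset ℕ) : Set ℕ) :=
              Nat.sInf_mem (Finset.coe_nonempty.2 ⟨_, Finset.mem_insert_self _ _⟩)
            exact_mod_cast this
          rcases Finset.mem_insert.1 hmemI with h | h
          · rw [hcardI, h]
            omega
          · have h1 : sInf (F : Set ℕ) ≤ sInf ((insert (k + N) F : Finset ℕ) : Set ℕ) :=
              Nat.sInf_le (by exact_mod_cast h)
            rcases hF with hF | ⟨_, hFc⟩
            · exact absurd h (by simp [hF])
            · omega
        · intro i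
          rcases eq_or_ne i (k + N) with h | h
          · subst h
            simp only [hgdef, Function.update_self]
            simp [hr0]
          · simp only [hgdef, Function.update_of_ne h, Finset.mem_insert]
            rw [hsupp i]
            tauto
    · intro k hEq
      have h1 : g k (k + N) = f (k + N) := congrFun hEq _
      have h2 : f (k + N) = 0 := by
        by_contra h'
        exact hj k ((hsupp _).1 h')
      rw [hgdef] at h1
      simp only [Function.update_self] at h1
      exact hr0 (h1.trans h2)
    · rw [tendsto_pi_nhds]
      intro i
      have hev : (fun _ : ℕ => f i) =ᶠ[atTop] fun k => g k i := by
        filter_upwards [eventually_gt_atTop i] with k hk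
        simp only [hgdef]
        exact (Function.update_of_ne (by omega) _ _).symm
      exact Tendsto.congr' hev tendsto_const_nhds

/-- The ω-th Cantor–Bendixson derivative of `R * 𝓕` is the singleton of the zero
function. -/
theorem derivSet_omega_RF (R : Set ℝ) (hc : R.Countable) (hcomp : IsCompact R)
    (hpos : R ⊆ Set.Ici 0) (h0 : (0 : ℝ) ∈ R) (hne : R ≠ {0})
    (hacc : ∀ x : ℝ, AccPt x (𝓟 R) ↔ x = 0) :
    ⋂ n : ℕ, derivSet^[n] (RF R) = {fun _ => 0} := by
  have key : ∀ n, derivSet^[n] (RF R) = An R n := by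
    intro n
    induction n with
    | zero => simp [An_zero]
    | succ n ih => rw [Function.iterate_succ_apply', ih, deriv_An hcomp h0 hne hacc]
  ext f
  simp only [Set.mem_iInter, key, Set.mem_singleton_iff]
  constructor
  · intro h
    funext i
    by_contra hi
    have hg := (h (i + 3)).2
    have h2 := hg {i} ⟨i, Finset.mem_singleton_self i⟩ (by simpa using hi)
    have h3 : sInf (({i} : Finset ℕ) : Set ℕ) = i := by simp
    simp only [Finset.card_singleton] at h2
    omega
  · intro h n
    subst h
    exact ⟨fun _ => h0, fun T hT hTnz => absurd rfl (hTnz _ hT.choose_spec)⟩
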